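/- For f:[0,1]→ℝ, the following two families of conditions are equivalent: (i) (1/n) Σ_{i=1}^n σ(t_i)^{-2} (f(t_i) − y_i) t_i^k = 0 for all k = 0, 1, …, m−1; (ii) ľ_k(f, 1) = ľ_k(h, 1) for all k = 1, …, m. -/

import Mathlib

open MeasureTheory Set

noncomputable section

/-- The iterated empirical integrals: `lcheck n t σ v k` is `ľ_{k+1}(·)` from the paper,
where `v i` plays the role of the value at the design point `t i` (e.g. `v i = f (t i)`,
or `v i = y i` for `ľ_k(h, ·)`).  Thus
`lcheck n t σ v 0 x = (1/n) ∑ᵢ σ(tᵢ)⁻² vᵢ 𝟙{tᵢ ≤ x}` and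
`lcheck n t σ v (k+1) x = ∫₀ˣ lcheck n t σ v k s ds`. -/
def lcheck (n : ℕ) (t : Fin n → ℝ) (σ : ℝ → ℝ) (v : Fin n → ℝ) : ℕ → ℝ → ℝ
  | 0 => fun x => (1 / n) * ∑ i, (σ (t i) ^ 2)⁻¹ * v i * (if t i ≤ x then 1 else 0)
  | (k + 1) => fun x => ∫ s in (0 : ℝ)..x, lcheck n t σ v k s


lemma int_ind (a x : ℝ) (ha : 0 ≤ a) :
    ∫ s in (0:ℝ)..x, (if a ≤ s then (1:ℝ) else 0) = max (x - a) 0 := by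
  have hmono : Monotone (fun s : ℝ => if a ≤ s then (1:ℝ) else 0) := by
    intro u v huv
    by_cases hu : a ≤ u <;> by_cases hv : a ≤ v <;> simp [hu, hv] <;> linarith
  rcases le_or_gt x a with h | h
  · rw [max_eq_right (by linarith)]
    have hne : ∀ᵐ s : ℝ, s ≠ a := ae_iff.mpr (by simp)
    have heq : (∫ s in (0:ℝ)..x, (if a ≤ s then (1:ℝ) else 0)) = ∫ _ in (0:ℝ)..x, (0:ℝ) := by
      apply intervalIntegral.integral_congr_ae
      filter_upwards [hne] with s hs hmem
      rw [Set.mem_uIoc] at hmem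
      have hsa : s < a := by
        rcases hmem with ⟨_, h2⟩ | ⟨_, h2⟩ <;> exact lt_of_le_of_ne (by linarith) hs
      simp [not_le.mpr hsa]
    simp [heq]
  · have h1 : (∫ s in (0:ℝ)..a, (if a ≤ s then (1:ℝ) else 0)) = max (a - a) 0 := by
      rw [max_eq_right (by linarith)]
      have hne : ∀ᵐ s : ℝ, s ≠ a := ae_iff.mpr (by simp)
      have heq : (∫ s in (0:ℝ)..a, (if a ≤ s then (1:ℝ) else 0)) = ∫ _ in (0:ℝ)..a, (0:ℝ) := by
        apply intervalIntegral.integral_congr_ae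
        filter_upwards [hne] with s hs hmem
        rw [Set.mem_uIoc] at hmem
        have hsa : s < a := by
          rcases hmem with ⟨_, h2⟩ | ⟨_, h2⟩ <;> exact lt_of_le_of_ne (by linarith) hs
        simp [not_le.mpr hsa]
      simp [heq]
    have h2 : (∫ s in a..x, (if a ≤ s then (1:ℝ) else 0)) = x - a := by
      have heq : (∫ s in a..x, (if a ≤ s then (1:ℝ) else 0)) = ∫ _ in a..x, (1:ℝ) := by
        apply intervalIntegral.integral_congr
        intro s hsm
        rw [Set.uIcc_of_le h.le] at hsm
        simp [hsm.1]
      rw [heq]; simp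
    have hmax : max (x - a) 0 = x - a := max_eq_left (by linarith)
    rw [← intervalIntegral.integral_add_adjacent_intervals
      (hmono.intervalIntegrable) (hmono.intervalIntegrable), h1, h2, hmax]
    simp

lemma int_pow (a x : ℝ) (ha : 0 ≤ a) (k : ℕ) (hk : 1 ≤ k) :
    ∫ s in (0:ℝ)..x, (max (s - a) 0) ^ k = (max (x - a) 0) ^ (k + 1) / (k + 1) := by
  have hcont : Continuous fun s : ℝ => (max (s - a) 0) ^ k :=
    ((continuous_id.sub continuous_const).max continuous_const).pow k
  have hzero : ∀ b : ℝ, b ≤ a → (∫ s in (0:ℝ)..b, (max (s - a) 0) ^ k) = 0 := by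
    intro b hb
    have heq : (∫ s in (0:ℝ)..b, (max (s - a) 0) ^ k) = ∫ _ in (0:ℝ)..b, (0:ℝ) := by
      apply intervalIntegral.integral_congr
      intro s hsm
      rw [Set.mem_uIcc] at hsm
      have hsa : s ≤ a := by rcases hsm with ⟨_, h2⟩ | ⟨_, h2⟩ <;> linarith
      simp [max_eq_right (by linarith : s - a ≤ 0), zero_pow (by omega : k ≠ 0)]
    simp [heq]
  rcases le_or_gt x a with h | h
  · rw [hzero x h, max_eq_right (by linarith), zero_pow (by omega : k + 1 ≠ 0), zero_div]
  · have h2 : (∫ s in a..x, (max (s - a) 0) ^ k) = (x - a) ^ (k + 1) / (k + 1) := by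
      have heq : (∫ s in a..x, (max (s - a) 0) ^ k) = ∫ s in a..x, (s - a) ^ k := by
        apply intervalIntegral.integral_congr
        intro s hsm
        rw [Set.uIcc_of_le h.le] at hsm
        simp [max_eq_left (by linarith [hsm.1] : (0:ℝ) ≤ s - a)]
      rw [heq, intervalIntegral.integral_comp_sub_right (fun u => u ^ k) a]
      simp [integral_pow]
    have hmax : max (x - a) 0 = x - a := max_eq_left (by linarith)
    rw [← intervalIntegral.integral_add_adjacent_intervals
      (hcont.intervalIntegrable 0 a) (hcont.intervalIntegrable a x), hzero a le_rfl, h2, hmax]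
    simp


lemma lcheck_closed (n : ℕ) (t : Fin n → ℝ) (σ : ℝ → ℝ) (v : Fin n → ℝ)
    (ht : ∀ i, 0 ≤ t i) :
    ∀ k : ℕ, 1 ≤ k → ∀ x : ℝ,
    lcheck n t σ v k x =
      ∑ i, (1 / n) * (σ (t i) ^ 2)⁻¹ * v i / (Nat.factorial k) * (max (x - t i) 0) ^ k := by
  intro k
  induction k with
  | zero => omega
  | succ k IH =>
    intro _ x
    rcases Nat.eq_zero_or_pos k with hk0 | hk1
    · subst hk0
      show (∫ s in (0:ℝ)..x, lcheck n t σ v 0 s) = _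
      have hrw : ∀ s : ℝ, lcheck n t σ v 0 s =
          ∑ i, ((1 / n) * (σ (t i) ^ 2)⁻¹ * v i) * (if t i ≤ s then (1:ℝ) else 0) := by
        intro s
        show (1 / (n:ℝ)) * ∑ i, _ = _
        rw [Finset.mul_sum]
        simp only [← mul_assoc]
      simp only [hrw]
      rw [intervalIntegral.integral_finset_sum]
      · apply Finset.sum_congr rfl
        intro i _
        rw [intervalIntegral.integral_const_mul, int_ind (t i) x (ht i)]
        simp [Nat.factorial]
      · intro i _
        apply IntervalIntegrable.const_mul
        apply Monotone.intervalIntegrable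
        intro u v' huv
        by_cases hu : t i ≤ u <;> by_cases hv : t i ≤ v' <;> simp [hu, hv] <;> linarith
    · show (∫ s in (0:ℝ)..x, lcheck n t σ v k s) = _
      simp only [IH hk1]
      rw [intervalIntegral.integral_finset_sum]
      · apply Finset.sum_congr rfl
        intro i _
        rw [intervalIntegral.integral_const_mul, int_pow (t i) x (ht i) k hk1]
        rw [Nat.factorial_succ]
        have h1 : (Nat.factorial k : ℝ) ≠ 0 := Nat.cast_ne_zero.mpr (Nat.factorial_ne_zero k)
        have h2 : ((k:ℝ) + 1) ≠ 0 := by positivity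
        field_simp
        push_cast
        ring
      · intro i _
        apply IntervalIntegrable.const_mul
        exact (((continuous_id.sub continuous_const).max continuous_const).pow k).intervalIntegrable 0 x

lemma lcheck_one (n : ℕ) (t : Fin n → ℝ) (σ : ℝ → ℝ) (v : Fin n → ℝ)
    (ht : ∀ i, t i ∈ Icc (0:ℝ) 1) (k : ℕ) :
    lcheck n t σ v k 1 =
      ∑ i, (1 / n) * (σ (t i) ^ 2)⁻¹ * v i / (Nat.factorial k) * (1 - t i) ^ k := by
  rcases Nat.eq_zero_or_pos k with hk0 | hk1
  · subst hk0
    show (1 / (n:ℝ)) * ∑ i, _ = _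
    rw [Finset.mul_sum]
    apply Finset.sum_congr rfl
    intro i _
    simp [(ht i).2, ← mul_assoc]
  · rw [lcheck_closed n t σ v (fun i => (ht i).1) k hk1 1]
    apply Finset.sum_congr rfl
    intro i _
    rw [max_eq_left (by linarith [(ht i).2] : (0:ℝ) ≤ 1 - t i)]

lemma binom_flip (n m : ℕ) (c a : Fin n → ℝ)
    (h : ∀ k, k < m → ∑ i, c i * a i ^ k = 0) :
    ∀ k, k < m → ∑ i, c i * (1 - a i) ^ k = 0 := by
  intro k hk
  have hexp : ∀ i : Fin n, (1 - a i) ^ k =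
      ∑ j ∈ Finset.range (k + 1), ((k.choose j : ℝ) * (-1) ^ j) * a i ^ j := by
    intro i
    rw [sub_eq_add_neg, add_comm, add_pow]
    apply Finset.sum_congr rfl
    intro j _
    rw [neg_pow]
    ring
  simp only [hexp, Finset.mul_sum]
  rw [Finset.sum_comm]
  apply Finset.sum_eq_zero
  intro j hj
  have hjm : j < m := by
    have := Finset.mem_range.mp hj; omega
  have hfac : ∑ i, c i * (((k.choose j : ℝ) * (-1) ^ j) * a i ^ j) =
      ((k.choose j : ℝ) * (-1) ^ j) * ∑ i, c i * a i ^ j := by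
    rw [Finset.mul_sum]
    apply Finset.sum_congr rfl
    intro i _
    ring
  rw [hfac, h j hjm, mul_zero]

/-- equivalence of the moment conditions
`(1/n) ∑ᵢ σ(tᵢ)⁻² (f(tᵢ) - yᵢ) tᵢ^k = 0` for `k = 0, …, m-1` with the boundary conditions
`ľ_k(f, 1) = ľ_k(h, 1)` for `k = 1, …, m` (here `lcheck … k` is `ľ_{k+1}`). -/
theorem moment_conditions_iff_lcheck_boundary
    (m n : ℕ) (hm : 1 ≤ m) (hn : 1 ≤ n)
    (t y : Fin n → ℝ) (ht : ∀ i, t i ∈ Icc (0 : ℝ) 1)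
    (σ : ℝ → ℝ) (hσ : ∀ x ∈ Icc (0 : ℝ) 1, 0 < σ x)
    (f : ℝ → ℝ) :
    (∀ k : ℕ, k < m →
        (1 / n) * ∑ i, (σ (t i) ^ 2)⁻¹ * (f (t i) - y i) * t i ^ k = 0) ↔
      (∀ k : ℕ, k < m →
        lcheck n t σ (fun i => f (t i)) k 1 = lcheck n t σ y k 1) := by
  have hn0 : (n : ℝ) ≠ 0 := Nat.cast_ne_zero.mpr (by omega)
  set c : Fin n → ℝ := fun i => (σ (t i) ^ 2)⁻¹ * (f (t i) - y i) with hc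
  -- reformulate side (i)
  have hiff1 : (∀ k : ℕ, k < m →
      (1 / n) * ∑ i, (σ (t i) ^ 2)⁻¹ * (f (t i) - y i) * t i ^ k = 0) ↔
      (∀ k : ℕ, k < m → ∑ i, c i * t i ^ k = 0) := by
    have hterm : ∀ (k : ℕ) (i : Fin n),
        (σ (t i) ^ 2)⁻¹ * (f (t i) - y i) * t i ^ k = c i * t i ^ k := by
      intro k i; rw [hc]
    constructor
    · intro h k hk
      have h0 := h k hk
      rw [mul_eq_zero] at h0
      rcases h0 with h0 | h0
      · exact absurd h0 (by simp [hn0])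
      · rw [← h0]
    · intro h k hk
      have : ∑ i, (σ (t i) ^ 2)⁻¹ * (f (t i) - y i) * t i ^ k = 0 := by
        rw [← h k hk]
      rw [this, mul_zero]
  -- reformulate side (ii)
  have hiff2 : (∀ k : ℕ, k < m →
      lcheck n t σ (fun i => f (t i)) k 1 = lcheck n t σ y k 1) ↔
      (∀ k : ℕ, k < m → ∑ i, c i * (1 - t i) ^ k = 0) := by
    have key : ∀ k : ℕ,
        (lcheck n t σ (fun i => f (t i)) k 1 = lcheck n t σ y k 1 ↔
          ∑ i, c i * (1 - t i) ^ k = 0) := by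
      intro k
      rw [lcheck_one n t σ _ ht k, lcheck_one n t σ y ht k, ← sub_eq_zero,
        ← Finset.sum_sub_distrib]
      have hterm : ∀ i : Fin n,
          (1 / (n:ℝ)) * (σ (t i) ^ 2)⁻¹ * (f (t i)) / (Nat.factorial k) * (1 - t i) ^ k -
          (1 / (n:ℝ)) * (σ (t i) ^ 2)⁻¹ * y i / (Nat.factorial k) * (1 - t i) ^ k =
          (1 / ((n:ℝ) * (Nat.factorial k))) * (c i * (1 - t i) ^ k) := by
        intro i
        rw [hc]
        have h1 : (Nat.factorial k : ℝ) ≠ 0 := Nat.cast_ne_zero.mpr (Nat.factorial_ne_zero k)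
        field_simp
      rw [Finset.sum_congr rfl (fun i _ => hterm i), ← Finset.mul_sum]
      have hne : (1 / ((n:ℝ) * (Nat.factorial k))) ≠ 0 := by
        have h1 : (Nat.factorial k : ℝ) ≠ 0 := Nat.cast_ne_zero.mpr (Nat.factorial_ne_zero k)
        positivity
      constructor
      · intro h
        rcases mul_eq_zero.mp h with h | h
        · exact absurd h hne
        · exact h
      · intro h; rw [h, mul_zero]
    exact forall_congr' fun k => imp_congr_right fun _ => key k
  rw [hiff1, hiff2]
  constructor
  · exact fun h => binom_flip n m c t h
  · intro h k hk
    have := binom_flip n m c (fun i => 1 - t i) h k hk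
    simpa using this


end
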